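/- Let A : [0,T] → ℝ be differentiable with A(T) = 0, satisfying A'(t) = 2(μ−r)²·A(t)²/((σ²+δ²)(2A(t) − γ)) for all t, and suppose 2A(t) − γ ≠ 0 for all t. Then A ≡ 0 on [0,T]. -/

import Mathlib

open Real Set

/-- If A is differentiable on [0,T] with A(T) = 0 and satisfies the Riccati-type
ODE A'(t) = 2(μ−r)²A(t)²/((σ²+δ²)(2A(t) − γ)), with 2A(t) − γ ≠ 0 throughout,
then A ≡ 0 on [0,T]. -/
theorem stmt6 (T μ r γ σ δ : ℝ) (hT : 0 < T) (hγ : 0 < γ) (hσ : 0 < σ)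
    (hδ : 0 ≤ δ) (A : ℝ → ℝ)
    (hderiv : ∀ t ∈ Icc (0 : ℝ) T,
      HasDerivAt A (2 * (μ - r) ^ 2 * (A t) ^ 2 /
        ((σ ^ 2 + δ ^ 2) * (2 * A t - γ))) t)
    (hne : ∀ t ∈ Icc (0 : ℝ) T, 2 * A t - γ ≠ 0)
    (hterm : A T = 0) :
    ∀ t ∈ Icc (0 : ℝ) T, A t = 0 := by
  have hs2 : (0:ℝ) < σ ^ 2 + δ ^ 2 := by positivity
  -- continuity of A on Icc
  have hAc : ContinuousOn A (Icc 0 T) := fun t ht =>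
    (hderiv t ht).continuousAt.continuousWithinAt
  have hcomp : IsCompact (Icc (0:ℝ) T) := isCompact_Icc
  have hnonempty : (Icc (0:ℝ) T).Nonempty := ⟨0, by constructor <;> linarith⟩
  -- M : max of |A|
  obtain ⟨tM, htM, hM⟩ := hcomp.exists_isMaxOn hnonempty (hAc.abs)
  set M := |A tM| with hMdef
  have hM0 : 0 ≤ M := abs_nonneg _
  -- m : min of |2A - γ|
  have hgc : ContinuousOn (fun t => |2 * A t - γ|) (Icc 0 T) :=
    ((continuousOn_const.mul hAc).sub continuousOn_const).abs
  obtain ⟨tm, htm, hm⟩ := hcomp.exists_isMinOn hnonempty hgc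
  set m := |2 * A tm - γ| with hmdef
  have hm0 : 0 < m := abs_pos.2 (hne tm htm)
  set K := 2 * (μ - r) ^ 2 * M / ((σ ^ 2 + δ ^ 2) * m) with hKdef
  have hK0 : 0 ≤ K := by positivity
  -- define B s = A (T - s)
  set B : ℝ → ℝ := fun s => A (T - s) with hBdef
  have hmem : ∀ s ∈ Icc (0:ℝ) T, T - s ∈ Icc (0:ℝ) T := by
    intro s hs; exact ⟨by linarith [hs.2], by linarith [hs.1]⟩
  have hBderiv : ∀ s ∈ Icc (0:ℝ) T, HasDerivAt B
      (-(2 * (μ - r) ^ 2 * (A (T - s)) ^ 2 /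
        ((σ ^ 2 + δ ^ 2) * (2 * A (T - s) - γ)))) s := by
    intro s hs
    have h1 : HasDerivAt (fun s : ℝ => T - s) (-1) s := by
      simpa using (hasDerivAt_id s).const_sub T
    have := (hderiv (T - s) (hmem s hs)).comp s h1
    have hBe : B = A ∘ HSub.hSub T := rfl
    rw [hBe]
    simpa [mul_comm, mul_neg, mul_one] using this
  have hBc : ContinuousOn B (Icc 0 T) := fun s hs =>
    ((hBderiv s hs).continuousAt).continuousWithinAt
  -- the bound
  have hbound : ∀ s ∈ Ico (0:ℝ) T,
      ‖-(2 * (μ - r) ^ 2 * (A (T - s)) ^ 2 /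
        ((σ ^ 2 + δ ^ 2) * (2 * A (T - s) - γ)))‖ ≤ K * ‖B s‖ + 0 := by
    intro s hs
    have hts : T - s ∈ Icc (0:ℝ) T := hmem s ⟨hs.1, le_of_lt hs.2⟩
    set a := A (T - s) with ha
    have hAM : |a| ≤ M := hM hts
    have hma : m ≤ |2 * a - γ| := hm hts
    have hden : (0:ℝ) < (σ ^ 2 + δ ^ 2) * |2 * a - γ| := by
      have := abs_pos.2 (hne _ hts)
      positivity
    have heq : ‖-(2 * (μ - r) ^ 2 * a ^ 2 / ((σ ^ 2 + δ ^ 2) * (2 * a - γ)))‖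
        = 2 * (μ - r) ^ 2 * a ^ 2 / ((σ ^ 2 + δ ^ 2) * |2 * a - γ|) := by
      rw [Real.norm_eq_abs, abs_neg, abs_div,
        abs_of_nonneg (by positivity : (0:ℝ) ≤ 2 * (μ - r) ^ 2 * a ^ 2),
        abs_mul, abs_of_nonneg hs2.le]
    rw [heq, add_zero]
    have hnum : 2 * (μ - r) ^ 2 * a ^ 2 ≤ 2 * (μ - r) ^ 2 * (M * |a|) := by
      have : a ^ 2 ≤ M * |a| := by
        calc a ^ 2 = |a| * |a| := by rw [← abs_mul, abs_mul_self]; ring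
        _ ≤ M * |a| := mul_le_mul_of_nonneg_right hAM (abs_nonneg a)
      nlinarith [sq_nonneg (μ - r)]
    have hdenle : (σ ^ 2 + δ ^ 2) * m ≤ (σ ^ 2 + δ ^ 2) * |2 * a - γ| :=
      mul_le_mul_of_nonneg_left hma hs2.le
    have h1 : 2 * (μ - r) ^ 2 * a ^ 2 / ((σ ^ 2 + δ ^ 2) * |2 * a - γ|)
        ≤ 2 * (μ - r) ^ 2 * (M * |a|) / ((σ ^ 2 + δ ^ 2) * m) := by
      apply div_le_div₀ (by positivity) hnum (by positivity) hdenle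
    refine h1.trans_eq ?_
    have : ‖B s‖ = |a| := by simp [hBdef, Real.norm_eq_abs, ha]
    rw [this, hKdef]
    field_simp
  have hB0 : ‖B 0‖ ≤ 0 := by simp [hBdef, hterm]
  have := norm_le_gronwallBound_of_norm_deriv_right_le hBc
    (fun s hs => (hBderiv s ⟨hs.1, le_of_lt hs.2⟩).hasDerivWithinAt) hB0 hbound
  intro t ht
  have hTt : T - t ∈ Icc (0:ℝ) T := ⟨by linarith [ht.2], by linarith [ht.1]⟩
  have h2 := this (T - t) hTt
  rw [gronwallBound_ε0_δ0] at h2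
  have : ‖B (T - t)‖ = |A t| := by simp [hBdef]
  rw [this] at h2
  exact abs_eq_zero.1 (le_antisymm h2 (abs_nonneg _))
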